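/- Let R be a commutative ring, let f = (f₁,…,f_r) and g = (g₁,…,g_r) be two regular sequences in R generating the same ideal I = (f₁,…,f_r) = (g₁,…,g_r), and let A = (a_{ij}) be an r×r matrix over R with gᵢ = Σⱼ a_{ij}fⱼ for every i. Then for every prime ideal p of R with I ⊆ p, the determinant det(A) does not belong to p; in particular, det(A) becomes a unit in the localization R_p for every prime p containing I. -/
import Mathlib

open RingTheory.Sequence

private lemma ofList_ofFn_eq {R : Type*} [CommRing R] {n : ℕ} (f : Fin n → R) :
    Ideal.ofList (List.ofFn f) = Ideal.span (Set.range f) := by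
  have : { r | r ∈ List.ofFn f } = Set.range f := by
    ext x; simp [List.mem_ofFn]
  exact congrArg Ideal.span this

/-- Relations on a weakly regular sequence have coefficients in the ideal. -/
private lemma coeff_mem_of_rel {R : Type*} [CommRing R] :
    ∀ (r : ℕ) (f : Fin r → R), IsWeaklyRegular R (List.ofFn f) →
      ∀ c : Fin r → R, ∑ i, c i * f i = 0 → ∀ i, c i ∈ Ideal.span (Set.range f) := by
  intro r
  induction r with
  | zero => intro f _ c _ i; exact i.elim0
  | succ n ih =>
    intro f hw c hc i
    set f' : Fin n → R := fun j => f j.castSucc with hf'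
    have hofn : List.ofFn f = List.ofFn f' ++ [f (Fin.last n)] := by
      rw [List.ofFn_succ', List.concat_eq_append]
    rw [hofn, isWeaklyRegular_append_iff] at hw
    obtain ⟨hw1, hw2⟩ := hw
    rw [isWeaklyRegular_singleton_iff] at hw2
    have hsub : Set.range f' ⊆ Set.range f := by
      rintro x ⟨j, rfl⟩; exact ⟨j.castSucc, rfl⟩
    have hle : Ideal.span (Set.range f') ≤ Ideal.span (Set.range f) :=
      Ideal.span_mono hsub
    have hflast : f (Fin.last n) ∈ Ideal.span (Set.range f) :=
      Ideal.subset_span ⟨Fin.last n, rfl⟩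
    -- identify the submodule appearing in hw2
    have hIs : (Ideal.ofList (List.ofFn f') • ⊤ : Submodule R R)
        = Submodule.restrictScalars R (Ideal.span (Set.range f')) := by
      rw [ofList_ofFn_eq]
      apply le_antisymm
      · exact Submodule.smul_le.mpr fun r hr x _ => Ideal.mul_mem_right x _ hr
      · intro x hx
        simpa [smul_eq_mul] using
          Submodule.smul_mem_smul hx (Submodule.mem_top (x := (1 : R)))
    -- split the sum
    have hsum : (∑ j, c j.castSucc * f' j) + c (Fin.last n) * f (Fin.last n) = 0 := by
      rw [← hc, Fin.sum_univ_castSucc]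
    have hmem : c (Fin.last n) * f (Fin.last n) ∈ Ideal.span (Set.range f') := by
      have heq : c (Fin.last n) * f (Fin.last n) = -∑ j, c j.castSucc * f' j := by
        linear_combination hsum
      rw [heq]
      exact neg_mem (Ideal.sum_mem _ fun j _ =>
        Ideal.mul_mem_left _ _ (Ideal.subset_span ⟨j, rfl⟩))
    -- use regularity of f (last n) on the quotient
    have hclast : c (Fin.last n) ∈ Ideal.span (Set.range f') := by
      have h1 : f (Fin.last n) •
          (Submodule.Quotient.mk (p := (Ideal.ofList (List.ofFn f') • ⊤ : Submodule R R))
            (c (Fin.last n))) = 0 := by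
        rw [← Submodule.Quotient.mk_smul, Submodule.Quotient.mk_eq_zero, hIs]
        simpa [smul_eq_mul, mul_comm] using hmem
      have h2 : (Submodule.Quotient.mk (p := (Ideal.ofList (List.ofFn f') • ⊤ : Submodule R R))
          (c (Fin.last n))) = 0 := hw2 (by simpa using h1)
      rw [Submodule.Quotient.mk_eq_zero, hIs] at h2
      exact h2
    -- express c (last n) as a combination of f'
    obtain ⟨d, hd⟩ := (Submodule.mem_span_range_iff_exists_fun R).mp hclast
    simp only [smul_eq_mul] at hd
    set c' : Fin n → R := fun j => c j.castSucc + d j * f (Fin.last n) with hc'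
    have hrel : ∑ j, c' j * f' j = 0 := by
      have step : ∑ j, c' j * f' j
          = (∑ j, c j.castSucc * f' j) + (∑ j, d j * f' j) * f (Fin.last n) := by
        rw [Finset.sum_mul, ← Finset.sum_add_distrib]
        exact Finset.sum_congr rfl fun j _ => by simp only [hc']; ring
      rw [step, hd]
      exact hsum
    have hmem' : ∀ j, c' j ∈ Ideal.span (Set.range f') := ih f' hw1 c' hrel
    -- conclude
    refine Fin.lastCases ?_ ?_ i
    · exact hle hclast
    · intro j
      have heq : c j.castSucc = c' j - d j * f (Fin.last n) := by simp [hc']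
      rw [heq]
      exact sub_mem (hle (hmem' j)) (Ideal.mul_mem_left _ _ hflast)

/-- If `f₁, …, f_r` and `g₁, …, g_r` are regular sequences in a commutative ring `R`
generating the same ideal `I`, and `A` is an `r × r` matrix with `gᵢ = Σⱼ a_{ij}fⱼ`,
then `det A` lies in no prime ideal containing `I`; in particular `det A` becomes a
unit in the localization at every prime containing `I`. -/
theorem det_transition_matrix_not_mem_prime
    {R : Type*} [CommRing R] {r : ℕ} (f g : Fin r → R)
    (hf : RingTheory.Sequence.IsRegular R (List.ofFn f))
    (hg : RingTheory.Sequence.IsRegular R (List.ofFn g))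
    (hI : Ideal.span (Set.range f) = Ideal.span (Set.range g))
    (A : Matrix (Fin r) (Fin r) R)
    (hA : ∀ i, g i = ∑ j, A i j * f j) :
    ∀ (p : Ideal R) [p.IsPrime], Ideal.span (Set.range f) ≤ p →
      A.det ∉ p ∧ IsUnit (algebraMap R (Localization.AtPrime p) A.det) := by
  intro p hp hle
  -- choose the matrix B expressing f in terms of g
  have hfg : ∀ i, ∃ b : Fin r → R, ∑ j, b j * g j = f i := by
    intro i
    have : f i ∈ Ideal.span (Set.range g) := hI ▸ Ideal.subset_span ⟨i, rfl⟩
    obtain ⟨b, hb⟩ := (Submodule.mem_span_range_iff_exists_fun R).mp this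
    exact ⟨b, by simpa [smul_eq_mul] using hb⟩
  choose B hB using hfg
  set C : Matrix (Fin r) (Fin r) R := Matrix.of (fun i j => B i j) * A with hC
  have hCf : ∀ i, ∑ k, C i k * f k = f i := by
    intro i
    calc ∑ k, C i k * f k = ∑ k, (∑ j, B i j * A j k) * f k := by
          refine Finset.sum_congr rfl fun k _ => ?_
          simp [hC, Matrix.mul_apply]
      _ = ∑ k, ∑ j, B i j * (A j k * f k) := by
          refine Finset.sum_congr rfl fun k _ => ?_
          rw [Finset.sum_mul]
          exact Finset.sum_congr rfl fun j _ => by ring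
      _ = ∑ j, ∑ k, B i j * (A j k * f k) := Finset.sum_comm
      _ = ∑ j, B i j * ∑ k, A j k * f k := by
          refine Finset.sum_congr rfl fun j _ => ?_
          rw [Finset.mul_sum]
      _ = ∑ j, B i j * g j := by simp_rw [← hA]
      _ = f i := hB i
  -- entries of C - 1 are coefficients of a relation on f, hence lie in the ideal
  have hrel : ∀ i k, C i k - (1 : Matrix (Fin r) (Fin r) R) i k ∈ Ideal.span (Set.range f) := by
    intro i k
    refine coeff_mem_of_rel r f hf.toIsWeaklyRegular
      (fun k => C i k - (1 : Matrix (Fin r) (Fin r) R) i k) ?_ k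
    have step : ∑ k, (C i k - (1 : Matrix (Fin r) (Fin r) R) i k) * f k
        = (∑ k, C i k * f k) - ∑ k, (1 : Matrix (Fin r) (Fin r) R) i k * f k := by
      rw [← Finset.sum_sub_distrib]
      exact Finset.sum_congr rfl fun k _ => by ring
    rw [step, hCf i]
    simp [Matrix.one_apply]
  -- reduce mod p
  have hmk : C.map (Ideal.Quotient.mk p) = 1 := by
    ext i k
    rw [Matrix.map_apply]
    have hm : C i k - (1 : Matrix (Fin r) (Fin r) R) i k ∈ p := hle (hrel i k)
    have h1 : (Ideal.Quotient.mk p) (C i k)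
        = (Ideal.Quotient.mk p) ((1 : Matrix (Fin r) (Fin r) R) i k) :=
      Ideal.Quotient.eq.mpr hm
    rw [h1]
    by_cases h : i = k <;> simp [Matrix.one_apply, h]
  have hdet : (Ideal.Quotient.mk p) C.det = 1 := by
    rw [RingHom.map_det, RingHom.mapMatrix_apply, hmk, Matrix.det_one]
  have hnot : A.det ∉ p := by
    intro hmem
    have h0 : (Ideal.Quotient.mk p) A.det = 0 := Ideal.Quotient.eq_zero_iff_mem.mpr hmem
    have hz : (Ideal.Quotient.mk p) C.det = 0 := by
      rw [hC, Matrix.det_mul, map_mul, h0, mul_zero]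
    rw [hdet] at hz
    exact one_ne_zero hz
  exact ⟨hnot,
    (IsLocalization.AtPrime.isUnit_to_map_iff (Localization.AtPrime p) p A.det).mpr hnot⟩
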